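/- Let A and B be n×n matrices over the tropical semiring such that both tropical products A^{n!}B^{n!} and B^{n!}A^{n!} are sign-nonsingular. Then for every index i, the (i,i) entries agree: [A^{n!}B^{n!}]_{ii} = [B^{n!}A^{n!}]_{ii}. -/

import Mathlib

/-- Tropical (min-plus) matrix product. -/
noncomputable def tropMul {l m o : Type*} [Fintype m] [Nonempty m]
    (A : Matrix l m ℝ) (B : Matrix m o ℝ) : Matrix l o ℝ :=
  fun i j => Finset.univ.inf' Finset.univ_nonempty fun t => A i t + B t j

/-- Evaluation of a word over `{x, y}` (here `true` stands for `x`, `false` for `y`)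
as a tropical matrix product; the empty word evaluates to the junk value `A`. -/
noncomputable def evalWord {n : ℕ} [NeZero n] (A B : Matrix (Fin n) (Fin n) ℝ) :
    List Bool → Matrix (Fin n) (Fin n) ℝ
  | [] => A
  | b :: t => t.foldl (fun M c => tropMul M (cond c A B)) (cond b A B)

/-- Tropical matrix power (`tropPow A k` is `A^k` for `k ≥ 1`; `A^0` is junk `= A`). -/
noncomputable def tropPow {n : ℕ} [NeZero n] (A : Matrix (Fin n) (Fin n) ℝ) (k : ℕ) :
    Matrix (Fin n) (Fin n) ℝ :=
  evalWord A A (List.replicate k true)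

/-- Tropical permanent. -/
noncomputable def tropPerm {n : ℕ} (A : Matrix (Fin n) (Fin n) ℝ) : ℝ :=
  Finset.univ.inf' Finset.univ_nonempty fun σ : Equiv.Perm (Fin n) => ∑ i, A i (σ i)

/-- `Σ(A)`: the set of permutations attaining the tropical permanent. -/
def minPerms {n : ℕ} (A : Matrix (Fin n) (Fin n) ℝ) : Set (Equiv.Perm (Fin n)) :=
  { σ | ∑ i, A i (σ i) = tropPerm A }

/-- A matrix is sign-nonsingular if all permutations in `Σ(A)` have the same parity. -/
def SignNonsingular {n : ℕ} (A : Matrix (Fin n) (Fin n) ℝ) : Prop :=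
  ∀ σ ∈ minPerms A, ∀ τ ∈ minPerms A, Equiv.Perm.sign σ = Equiv.Perm.sign τ

/-- A matrix is sign-singular if `Σ(A)` contains two permutations of different parity. -/
def SignSingular {n : ℕ} (A : Matrix (Fin n) (Fin n) ℝ) : Prop :=
  ∃ σ ∈ minPerms A, ∃ τ ∈ minPerms A, Equiv.Perm.sign σ ≠ Equiv.Perm.sign τ

/-- Similarity transformation determined by `s`. -/
def simTrans {n : ℕ} (s : Fin n → ℝ) (C : Matrix (Fin n) (Fin n) ℝ) :
    Matrix (Fin n) (Fin n) ℝ :=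
  fun i j => C i j + s i - s j

/-- Diagonally `H`-dominant matrix. -/
def DiagDominant {n : ℕ} (H : ℝ) (A : Matrix (Fin n) (Fin n) ℝ) : Prop :=
  ∀ i j, A i j ≥ max (A i i) (A j j) + H * |A i i - A j j|

/-- Diagonally `H`-dominant pair of matrices. -/
def DiagDomPair {n : ℕ} (H : ℝ) (A B : Matrix (Fin n) (Fin n) ℝ) : Prop :=
  (∀ i, A i i = B i i) ∧ DiagDominant H (fun i j => min (A i j) (B i j))

section stmt4Aux

open Finset

variable {n : ℕ} [NeZero n]

private lemma tmul_le (M N : Matrix (Fin n) (Fin n) ℝ) (i j t : Fin n) :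
    tropMul M N i j ≤ M i t + N t j :=
  Finset.inf'_le _ (Finset.mem_univ t)

private lemma tmul_exists (M N : Matrix (Fin n) (Fin n) ℝ) (i j : Fin n) :
    ∃ t, tropMul M N i j = M i t + N t j := by
  obtain ⟨t, -, h⟩ := Finset.exists_mem_eq_inf' Finset.univ_nonempty
    (fun t => M i t + N t j)
  exact ⟨t, h⟩

omit [NeZero n] in
private lemma tropPerm_le' (M : Matrix (Fin n) (Fin n) ℝ) (σ : Equiv.Perm (Fin n)) :
    tropPerm M ≤ ∑ i, M i (σ i) :=
  Finset.inf'_le _ (Finset.mem_univ σ)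

omit [NeZero n] in
private lemma tropPerm_exists (M : Matrix (Fin n) (Fin n) ℝ) :
    ∃ σ : Equiv.Perm (Fin n), tropPerm M = ∑ i, M i (σ i) := by
  obtain ⟨σ, -, h⟩ := Finset.exists_mem_eq_inf' Finset.univ_nonempty
    (fun σ : Equiv.Perm (Fin n) => ∑ i, M i (σ i))
  exact ⟨σ, h⟩

private lemma tmul_assoc (M N K : Matrix (Fin n) (Fin n) ℝ) :
    tropMul (tropMul M N) K = tropMul M (tropMul N K) := by
  funext i j
  apply le_antisymm
  · refine Finset.le_inf' _ _ fun t _ => ?_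
    obtain ⟨s, hs⟩ := tmul_exists N K t j
    calc tropMul (tropMul M N) K i j ≤ tropMul M N i s + K s j := tmul_le _ _ _ _ _
      _ ≤ (M i t + N t s) + K s j := by linarith [tmul_le M N i s t]
      _ = M i t + (N t s + K s j) := by ring
      _ = M i t + tropMul N K t j := by rw [hs]
  · refine Finset.le_inf' _ _ fun s _ => ?_
    obtain ⟨t, ht⟩ := tmul_exists M N i s
    calc tropMul M (tropMul N K) i j ≤ M i t + tropMul N K t j := tmul_le _ _ _ _ _
      _ ≤ M i t + (N t s + K s j) := by linarith [tmul_le N K t j s]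
      _ = (M i t + N t s) + K s j := by ring
      _ = tropMul M N i s + K s j := by rw [ht]

/-- Auxiliary power: `powAux A k = A^(k+1)`. -/
private noncomputable def powAux (A : Matrix (Fin n) (Fin n) ℝ) : ℕ → Matrix (Fin n) (Fin n) ℝ
  | 0 => A
  | (k+1) => tropMul (powAux A k) A

private lemma tropPow_eq_aux (A : Matrix (Fin n) (Fin n) ℝ) :
    ∀ k, tropPow A (k+1) = powAux A k := by
  have hrep : ∀ k, tropPow A (k+1) = (List.replicate k true).foldl
      (fun M c => tropMul M (cond c A A)) A := by
    intro k
    show evalWord A A (List.replicate (k+1) true) = _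
    rw [List.replicate_succ]
    rfl
  intro k
  induction k with
  | zero => rw [hrep 0]; rfl
  | succ k ih =>
      rw [hrep (k+1), List.replicate_succ', List.foldl_append]
      show tropMul ((List.replicate k true).foldl (fun M c => tropMul M (cond c A A)) A) A
          = powAux A (k+1)
      rw [← hrep k, ih]
      rfl

private lemma powAux_walk (A : Matrix (Fin n) (Fin n) ℝ) (x : ℕ → Fin n) :
    ∀ k, powAux A k (x 0) (x (k+1)) ≤ ∑ j ∈ Finset.range (k+1), A (x j) (x (j+1)) := by
  intro k
  induction k with
  | zero => simp [powAux]
  | succ k ih =>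
      have h1 : powAux A (k+1) (x 0) (x (k+2))
          ≤ powAux A k (x 0) (x (k+1)) + A (x (k+1)) (x (k+2)) := by
        show tropMul (powAux A k) A (x 0) (x (k+2)) ≤ _
        exact tmul_le _ _ _ _ _
      calc powAux A (k+1) (x 0) (x (k+2))
          ≤ powAux A k (x 0) (x (k+1)) + A (x (k+1)) (x (k+2)) := h1
        _ ≤ (∑ j ∈ Finset.range (k+1), A (x j) (x (j+1))) + A (x (k+1)) (x (k+2)) := by
            linarith
        _ = ∑ j ∈ Finset.range (k+2), A (x j) (x (j+1)) := (Finset.sum_range_succ _ _).symm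

/-- The key unconditional diagonal bound: `∑ i (A^{n!})_{ii} ≤ n! ⬝ perm(A)`. -/
private lemma diag_sum_le (A : Matrix (Fin n) (Fin n) ℝ) :
    ∑ i, tropPow A (Nat.factorial n) i i ≤ (Nat.factorial n : ℝ) * tropPerm A := by
  obtain ⟨p, hp⟩ := tropPerm_exists A
  have hpm : p ^ (Nat.factorial n) = 1 := by
    have h : p ^ Fintype.card (Equiv.Perm (Fin n)) = 1 := pow_card_eq_one
    rwa [Fintype.card_perm, Fintype.card_fin] at h
  obtain ⟨m', hm'⟩ := Nat.exists_eq_succ_of_ne_zero (Nat.factorial_ne_zero n)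
  rw [hm'] at hpm ⊢
  have hdiag : ∀ i : Fin n, tropPow A (m'+1) i i
      ≤ ∑ j ∈ Finset.range (m'+1), A ((p ^ j) i) ((p ^ (j+1)) i) := by
    intro i
    have h := powAux_walk A (fun j => (p ^ j) i) m'
    have e0 : (p ^ 0) i = i := by simp
    have e1 : (p ^ (m'+1)) i = i := by rw [hpm]; rfl
    rw [e0, e1] at h
    rw [tropPow_eq_aux A m']
    exact h
  calc ∑ i, tropPow A (m'+1) i i
      ≤ ∑ i, ∑ j ∈ Finset.range (m'+1), A ((p ^ j) i) ((p ^ (j+1)) i) :=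
        Finset.sum_le_sum fun i _ => hdiag i
    _ = ∑ j ∈ Finset.range (m'+1), ∑ i, A ((p ^ j) i) ((p ^ (j+1)) i) := Finset.sum_comm
    _ = ∑ j ∈ Finset.range (m'+1), ∑ i, A i (p i) := by
        refine Finset.sum_congr rfl fun j _ => ?_
        have hps : ∀ i : Fin n, (p ^ (j+1)) i = p ((p ^ j) i) := by
          intro i
          rw [pow_succ, pow_mul_comm', Equiv.Perm.mul_apply]
        calc ∑ i, A ((p ^ j) i) ((p ^ (j+1)) i)
            = ∑ i, A ((p ^ j) i) (p ((p ^ j) i)) :=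
              Finset.sum_congr rfl fun i _ => by rw [hps i]
          _ = ∑ i, A i (p i) := Equiv.sum_comp (p ^ j) (fun t => A t (p t))
    _ = ((m'+1 : ℕ) : ℝ) * tropPerm A := by
        rw [Finset.sum_const, Finset.card_range, ← hp, nsmul_eq_mul]

/-- Layered Cauchy–Binet: either the weight of `σ` in the product is at least the sum of the
permanents of the factors, or there is a permutation of opposite sign and no larger weight. -/
private lemma keyR (M : Matrix (Fin n) (Fin n) ℝ) (L : List (Matrix (Fin n) (Fin n) ℝ)) :
    ∀ σ : Equiv.Perm (Fin n),
      (tropPerm M + (L.map tropPerm).sum ≤ ∑ i, (L.foldl tropMul M) i (σ i)) ∨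
      (∃ τ : Equiv.Perm (Fin n),
        (∑ i, (L.foldl tropMul M) i (τ i)) ≤ (∑ i, (L.foldl tropMul M) i (σ i)) ∧
        Equiv.Perm.sign τ ≠ Equiv.Perm.sign σ) := by
  induction L using List.reverseRecOn with
  | nil =>
      intro σ
      left
      simpa using tropPerm_le' M σ
  | append_singleton L' G ih =>
      intro σ
      have hfold : (L' ++ [G]).foldl tropMul M = tropMul (L'.foldl tropMul M) G := by
        simp [List.foldl_append]
      rw [hfold]
      set E' : Matrix (Fin n) (Fin n) ℝ := L'.foldl tropMul M with hE'
      have hmap : ((L' ++ [G]).map tropPerm).sum = (L'.map tropPerm).sum + tropPerm G := by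
        simp
      choose f hfeq using fun j => tmul_exists E' G j (σ j)
      by_cases hinj : Function.Injective f
      · -- injective: lift to a permutation and recurse
        have hbij : Function.Bijective f := Finite.injective_iff_bijective.mp hinj
        set g : Equiv.Perm (Fin n) := Equiv.ofBijective f hbij with hgdef
        have hg : ∀ j, g j = f j := fun j => rfl
        have hw : ∑ i, tropMul E' G i (σ i)
            = (∑ i, E' i (g i)) + ∑ t, G t (σ (g.symm t)) := by
          have h1 : ∑ i, tropMul E' G i (σ i) = ∑ i, (E' i (f i) + G (f i) (σ i)) :=
            Finset.sum_congr rfl fun i _ => hfeq i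
          have h2 : ∑ i, G (f i) (σ i) = ∑ t, G t (σ (g.symm t)) := by
            rw [← Equiv.sum_comp g (fun t => G t (σ (g.symm t)))]
            refine Finset.sum_congr rfl fun i _ => ?_
            rw [Equiv.symm_apply_apply g i, hg i]
          rw [h1, Finset.sum_add_distrib, h2]
          refine congrArg (· + _) (Finset.sum_congr rfl fun i _ => by rw [hg])
        rcases ih g with hL | ⟨τ', hτ'le, hτ'sign⟩
        · left
          rw [hmap]
          have h2 : tropPerm G ≤ ∑ t, G t (σ (g.symm t)) := by
            have := tropPerm_le' G (g.symm.trans σ)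
            simpa [Equiv.trans_apply] using this
          rw [hw]
          linarith
        · right
          refine ⟨τ'.trans (g.symm.trans σ), ?_, ?_⟩
          · have happ : ∀ i, (τ'.trans (g.symm.trans σ)) i = σ (g.symm (τ' i)) := fun i => rfl
            have hterm : ∀ i, tropMul E' G i (σ (g.symm (τ' i)))
                ≤ E' i (τ' i) + G (τ' i) (σ (g.symm (τ' i))) := fun i => tmul_le _ _ _ _ _
            have hsum2 : ∑ i, G (τ' i) (σ (g.symm (τ' i))) = ∑ t, G t (σ (g.symm t)) :=
              Equiv.sum_comp τ' (fun t => G t (σ (g.symm t)))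
            calc ∑ i, tropMul E' G i ((τ'.trans (g.symm.trans σ)) i)
                = ∑ i, tropMul E' G i (σ (g.symm (τ' i))) :=
                  Finset.sum_congr rfl fun i _ => by rw [happ i]
              _ ≤ ∑ i, (E' i (τ' i) + G (τ' i) (σ (g.symm (τ' i)))) :=
                  Finset.sum_le_sum fun i _ => hterm i
              _ = (∑ i, E' i (τ' i)) + ∑ t, G t (σ (g.symm t)) := by
                  rw [Finset.sum_add_distrib, hsum2]
              _ ≤ (∑ i, E' i (g i)) + ∑ t, G t (σ (g.symm t)) := by linarith
              _ = ∑ i, tropMul E' G i (σ i) := hw.symm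
          · have hmulform : τ'.trans (g.symm.trans σ) = σ * g⁻¹ * τ' := rfl
            rw [hmulform, map_mul, map_mul, map_inv]
            intro hcontra
            apply hτ'sign
            have h3 : Equiv.Perm.sign σ * ((Equiv.Perm.sign g)⁻¹ * Equiv.Perm.sign τ')
                = Equiv.Perm.sign σ * 1 := by
              rw [← mul_assoc, hcontra, mul_one]
            have h4 : (Equiv.Perm.sign g)⁻¹ * Equiv.Perm.sign τ' = 1 := mul_left_cancel h3
            rw [inv_mul_eq_one] at h4
            exact h4.symm
      · -- non-injective: swap two colliding rows
        rw [Function.not_injective_iff] at hinj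
        obtain ⟨j1, j2, hfe, hne⟩ := hinj
        right
        set s : Equiv.Perm (Fin n) := Equiv.swap j1 j2 with hsdef
        refine ⟨σ * s, ?_, ?_⟩
        · have hfs : ∀ i, f (s i) = f i := by
            intro i
            rcases eq_or_ne i j1 with rfl | h1
            · rw [hsdef]; rw [Equiv.swap_apply_left]; exact hfe.symm
            · rcases eq_or_ne i j2 with rfl | h2
              · rw [hsdef]; rw [Equiv.swap_apply_right]; exact hfe
              · rw [hsdef]; rw [Equiv.swap_apply_of_ne_of_ne h1 h2]
          have hterm : ∀ i, tropMul E' G i ((σ * s) i)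
              ≤ E' i (f i) + G (f (s i)) (σ (s i)) := by
            intro i
            rw [Equiv.Perm.mul_apply, hfs i]
            exact tmul_le _ _ _ _ (f i)
          calc ∑ i, tropMul E' G i ((σ * s) i)
              ≤ ∑ i, (E' i (f i) + G (f (s i)) (σ (s i))) :=
                Finset.sum_le_sum fun i _ => hterm i
            _ = (∑ i, E' i (f i)) + ∑ i, G (f (s i)) (σ (s i)) := Finset.sum_add_distrib
            _ = (∑ i, E' i (f i)) + ∑ i, G (f i) (σ i) := by
                rw [Equiv.sum_comp s (fun i => G (f i) (σ i))]
            _ = ∑ i, tropMul E' G i (σ i) := by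
                rw [← Finset.sum_add_distrib]
                exact Finset.sum_congr rfl fun i _ => (hfeq i).symm
        · rw [map_mul, hsdef, Equiv.Perm.sign_swap hne]
          intro hcontra
          have h3 : Equiv.Perm.sign σ * (-1) = Equiv.Perm.sign σ * 1 := by
            rw [hcontra, mul_one]
          have h4 : (-1 : ℤˣ) = 1 := mul_left_cancel h3
          exact absurd h4 (by decide)

private lemma foldl_replicate_left (A : Matrix (Fin n) (Fin n) ℝ) :
    ∀ k, (List.replicate k A).foldl tropMul A = tropPow A (k+1) := by
  intro k
  induction k with
  | zero => rw [tropPow_eq_aux A 0]; rfl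
  | succ k ih =>
      rw [List.replicate_succ', List.foldl_append, ih, tropPow_eq_aux A (k+1),
        tropPow_eq_aux A k]
      rfl

private lemma foldl_replicate_right (B : Matrix (Fin n) (Fin n) ℝ) :
    ∀ k (X : Matrix (Fin n) (Fin n) ℝ),
      (List.replicate (k+1) B).foldl tropMul X = tropMul X (tropPow B (k+1)) := by
  intro k
  induction k with
  | zero =>
      intro X
      rw [tropPow_eq_aux B 0]
      rfl
  | succ k ih =>
      intro X
      rw [List.replicate_succ' (n := k+1), List.foldl_append, ih X, tropPow_eq_aux B (k+1)]
      show tropMul (tropMul X (tropPow B (k+1))) B = _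
      rw [tmul_assoc, tropPow_eq_aux B k]
      rfl

private lemma prod_form (A B : Matrix (Fin n) (Fin n) ℝ) :
    (List.replicate (Nat.factorial n - 1) A ++ List.replicate (Nat.factorial n) B).foldl
        tropMul A
      = tropMul (tropPow A (Nat.factorial n)) (tropPow B (Nat.factorial n)) := by
  obtain ⟨m', hm'⟩ := Nat.exists_eq_succ_of_ne_zero (Nat.factorial_ne_zero n)
  rw [hm', show m' + 1 - 1 = m' from rfl]
  rw [List.foldl_append, foldl_replicate_left, foldl_replicate_right]

/-- Main lemma: sign-nonsingularity of `A^{n!} B^{n!}` forces its diagonal to split. -/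
private lemma main_diag (A B : Matrix (Fin n) (Fin n) ℝ)
    (h : SignNonsingular (tropMul (tropPow A (Nat.factorial n)) (tropPow B (Nat.factorial n)))) :
    ∀ i, tropMul (tropPow A (Nat.factorial n)) (tropPow B (Nat.factorial n)) i i
        = tropPow A (Nat.factorial n) i i + tropPow B (Nat.factorial n) i i := by
  have hub : ∀ i, tropMul (tropPow A (Nat.factorial n)) (tropPow B (Nat.factorial n)) i i
      ≤ tropPow A (Nat.factorial n) i i + tropPow B (Nat.factorial n) i i :=
    fun i => tmul_le _ _ i i i
  obtain ⟨σ, hσ⟩ := tropPerm_exists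
    (tropMul (tropPow A (Nat.factorial n)) (tropPow B (Nat.factorial n)))
  have hKey := keyR A (List.replicate (Nat.factorial n - 1) A
      ++ List.replicate (Nat.factorial n) B) σ
  rw [prod_form A B] at hKey
  have hperm_lb : (Nat.factorial n : ℝ) * tropPerm A + (Nat.factorial n : ℝ) * tropPerm B
      ≤ tropPerm (tropMul (tropPow A (Nat.factorial n)) (tropPow B (Nat.factorial n))) := by
    rcases hKey with hL | ⟨τ, hτle, hτsign⟩
    · have hmapsum : (((List.replicate (Nat.factorial n - 1) A
          ++ List.replicate (Nat.factorial n) B)).map tropPerm).sum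
          = ((Nat.factorial n - 1 : ℕ) : ℝ) * tropPerm A
            + (Nat.factorial n : ℝ) * tropPerm B := by
        simp [List.map_append, List.sum_append, List.map_replicate, List.sum_replicate,
          nsmul_eq_mul]
      rw [hmapsum, ← hσ] at hL
      have hcast : ((Nat.factorial n - 1 : ℕ) : ℝ) = (Nat.factorial n : ℝ) - 1 := by
        rw [Nat.cast_sub (Nat.one_le_iff_ne_zero.mpr (Nat.factorial_ne_zero n))]
        simp
      rw [hcast] at hL
      linarith
    · exfalso
      have hτmem : τ ∈ minPerms
          (tropMul (tropPow A (Nat.factorial n)) (tropPow B (Nat.factorial n))) := by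
        have h1 := tropPerm_le'
          (tropMul (tropPow A (Nat.factorial n)) (tropPow B (Nat.factorial n))) τ
        have : ∑ i, (tropMul (tropPow A (Nat.factorial n)) (tropPow B (Nat.factorial n))) i (τ i)
            = tropPerm (tropMul (tropPow A (Nat.factorial n)) (tropPow B (Nat.factorial n))) := by
          rw [hσ] at h1 ⊢
          linarith
        exact this
      have hσmem : σ ∈ minPerms
          (tropMul (tropPow A (Nat.factorial n)) (tropPow B (Nat.factorial n))) := hσ.symm
      exact hτsign (h τ hτmem σ hσmem)
  have htr : tropPerm (tropMul (tropPow A (Nat.factorial n)) (tropPow B (Nat.factorial n)))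
      ≤ ∑ i, tropMul (tropPow A (Nat.factorial n)) (tropPow B (Nat.factorial n)) i i := by
    have h1 := tropPerm_le'
      (tropMul (tropPow A (Nat.factorial n)) (tropPow B (Nat.factorial n))) 1
    exact h1
  have hdsA := diag_sum_le A
  have hdsB := diag_sum_le B
  have hsum_ub : ∑ i, tropMul (tropPow A (Nat.factorial n)) (tropPow B (Nat.factorial n)) i i
      ≤ ∑ i, (tropPow A (Nat.factorial n) i i + tropPow B (Nat.factorial n) i i) :=
    Finset.sum_le_sum fun i _ => hub i
  have hsplit : ∑ i, (tropPow A (Nat.factorial n) i i + tropPow B (Nat.factorial n) i i)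
      = ∑ i, tropPow A (Nat.factorial n) i i + ∑ i, tropPow B (Nat.factorial n) i i :=
    Finset.sum_add_distrib
  have hsum_eq : ∑ i, tropMul (tropPow A (Nat.factorial n)) (tropPow B (Nat.factorial n)) i i
      = ∑ i, (tropPow A (Nat.factorial n) i i + tropPow B (Nat.factorial n) i i) := by
    linarith
  intro i
  exact (Finset.sum_eq_sum_iff_of_le (fun i _ => hub i)).mp hsum_eq i (Finset.mem_univ i)

end stmt4Aux

/-- If `A^{n!}B^{n!}` and `B^{n!}A^{n!}` are sign-nonsingular then
their diagonal entries agree. -/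
theorem stmt4 {n : ℕ} [NeZero n] (A B : Matrix (Fin n) (Fin n) ℝ)
    (h₁ : SignNonsingular (tropMul (tropPow A (Nat.factorial n)) (tropPow B (Nat.factorial n))))
    (h₂ : SignNonsingular (tropMul (tropPow B (Nat.factorial n)) (tropPow A (Nat.factorial n))))
    (i : Fin n) :
    tropMul (tropPow A (Nat.factorial n)) (tropPow B (Nat.factorial n)) i i =
      tropMul (tropPow B (Nat.factorial n)) (tropPow A (Nat.factorial n)) i i := by
  have e1 := main_diag A B h₁ i
  have e2 := main_diag B A h₂ i
  rw [e1, e2]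
  exact add_comm _ _
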